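/- arXiv:2510.26934 — 2 statements merged into one kernel-verified Lean document; each statement's English description precedes it below -/
import Mathlib

section
/- Fix ε > 0. Let β: D → [0,1] be a function on a dyadic lattice D of an Ahlfors regular measure μ, and say E′ ∈ D dominates E ∈ D from above if E′ ⊇ E and β(E′)² > (ℓ(E′)/ℓ(E))^ε β(E)². Let D_up be the cubes not dominated from above by any cube. Then there is a constant c(ε) > 0, depending also on the Ahlfors-regularity data, such that Σ_{E ∈ D_up} β(E)² μ(E) ≥ c(ε) Σ_{E ∈ D} β(E)² μ(E). -/
open scoped ENNReal

/-- An abstract dyadic lattice (Christ–David cubes) for an Ahlfors regular measure: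
cubes carry a generation `J`, an inclusion relation `sub`, and a mass `m = μ(E)`.
Cubes containing a given cube form a chain, each cube has an ancestor in every
higher generation, and the cubes of a fixed generation contained in a cube `E₀`
partition it (so their masses sum to at most `m E₀`). -/
structure AbsDyadicLattice (ι : Type) where
  J : ι → ℤ
  sub : ι → ι → Prop
  m : ι → ℝ≥0∞
  sub_refl : ∀ E, sub E E
  sub_trans : ∀ {a b c}, sub a b → sub b c → sub a c
  sub_antisymm : ∀ {a b}, sub a b → sub b a → a = b
  sub_gen : ∀ {a b}, sub a b → J a ≤ J b
  chain : ∀ {a b c}, sub a b → sub a c → sub b c ∨ sub c b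
  exists_anc : ∀ E, ∀ j : ℤ, J E ≤ j → ∃ E', sub E E' ∧ J E' = j
  m_pos : ∀ E, 0 < m E
  m_lt_top : ∀ E, m E < ⊤
  packing : ∀ (E₀ : ι) (j : ℤ), j ≤ J E₀ →
    ∑' E : {E : ι // sub E E₀ ∧ J E = j}, m E.1 ≤ m E₀

lemma AbsDyadicLattice.eq_of_sub_of_J_eq {ι : Type} (D : AbsDyadicLattice ι)
    {a b : ι} (hab : D.sub a b) (hJ : D.J a = D.J b) : a = b := by
  classical
  by_contra hne
  have key := D.packing b (D.J b) le_rfl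
  have ha : D.sub a b ∧ D.J a = D.J b := ⟨hab, hJ⟩
  have hb : D.sub b b ∧ D.J b = D.J b := ⟨D.sub_refl b, rfl⟩
  have hne' : (⟨a, ha⟩ : {E : ι // D.sub E b ∧ D.J E = D.J b}) ≠ ⟨b, hb⟩ := by
    simpa using hne
  have hsum : D.m a + D.m b ≤ ∑' E : {E : ι // D.sub E b ∧ D.J E = D.J b}, D.m E.1 := by
    have h := ENNReal.sum_le_tsum (f := fun E : {E : ι // D.sub E b ∧ D.J E = D.J b} => D.m E.1)
      ({⟨a, ha⟩, ⟨b, hb⟩} : Finset {E : ι // D.sub E b ∧ D.J E = D.J b})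
    rwa [Finset.sum_pair hne'] at h
  have h2 : D.m a + D.m b ≤ 0 + D.m b := by simpa using hsum.trans key
  have h3 : D.m a ≤ 0 := (ENNReal.add_le_add_iff_right (D.m_lt_top b).ne).mp h2
  exact absurd (le_antisymm h3 zero_le) (D.m_pos a).ne'

lemma exists_top {ι : Type} (D : AbsDyadicLattice ι) (β : ι → ℝ)
    (hβ : ∀ E, β E ∈ Set.Icc (0 : ℝ) 1) (ε : ℝ) (hε : 0 < ε) (E : ι) (hE : β E ≠ 0) :
    ∃ F : ι, D.sub E F ∧
      (∀ E', ¬ (D.sub F E' ∧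
        (2 : ℝ) ^ (((D.J E' - D.J F : ℤ) : ℝ) * ε) * (β F) ^ 2 < (β E') ^ 2)) ∧
      (2 : ℝ) ^ (((D.J F - D.J E : ℤ) : ℝ) * ε) * (β E) ^ 2 ≤ (β F) ^ 2 := by
  set P : ι → Prop := fun F => D.sub E F ∧
    (2 : ℝ) ^ (((D.J F - D.J E : ℤ) : ℝ) * ε) * (β E) ^ 2 ≤ (β F) ^ 2 with hP
  have hβpos : 0 < β E ^ 2 := by
    have := (hβ E).1
    positivity
  have hPE : P E := ⟨D.sub_refl E, by simp⟩
  have hbdd : ∃ b : ℤ, ∀ z : ℤ, (∃ F, P F ∧ D.J F = z) → z ≤ b := by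
    refine ⟨D.J E + ⌈Real.log ((β E ^ 2)⁻¹) / (ε * Real.log 2)⌉, ?_⟩
    rintro z ⟨F, ⟨hsub, hle⟩, rfl⟩
    have hβF : β F ^ 2 ≤ 1 := by
      have h1 := (hβ F).1; have h2 := (hβ F).2; nlinarith
    have h1 : (2 : ℝ) ^ (((D.J F - D.J E : ℤ) : ℝ) * ε) ≤ (β E ^ 2)⁻¹ := by
      rw [← one_div, le_div_iff₀ hβpos]
      exact hle.trans hβF
    have h2 : ((D.J F - D.J E : ℤ) : ℝ) * ε * Real.log 2 ≤ Real.log ((β E ^ 2)⁻¹) := by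
      have := Real.log_le_log (by positivity) h1
      rwa [Real.log_rpow (by norm_num : (0:ℝ) < 2)] at this
    have hεlog : 0 < ε * Real.log 2 := by
      have : (0:ℝ) < Real.log 2 := Real.log_pos (by norm_num)
      positivity
    have h3 : ((D.J F - D.J E : ℤ) : ℝ) ≤ Real.log ((β E ^ 2)⁻¹) / (ε * Real.log 2) := by
      rw [le_div_iff₀ hεlog]
      linarith [h2]
    have h4 : ((D.J F - D.J E : ℤ) : ℝ) ≤ (⌈Real.log ((β E ^ 2)⁻¹) / (ε * Real.log 2)⌉ : ℤ) :=
      h3.trans (Int.le_ceil _)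
    have h5 : D.J F - D.J E ≤ ⌈Real.log ((β E ^ 2)⁻¹) / (ε * Real.log 2)⌉ := by exact_mod_cast h4
    omega
  obtain ⟨j, ⟨F, hPF, hJF⟩, hmax⟩ :=
    Int.exists_greatest_of_bdd hbdd ⟨D.J E, E, hPE, rfl⟩
  refine ⟨F, hPF.1, ?_, hPF.2⟩
  rintro E' ⟨hsub', hlt⟩
  have hPE' : P E' := by
    refine ⟨D.sub_trans hPF.1 hsub', ?_⟩
    have key : (2 : ℝ) ^ (((D.J E' - D.J E : ℤ) : ℝ) * ε)
        = (2 : ℝ) ^ (((D.J E' - D.J F : ℤ) : ℝ) * ε) * (2 : ℝ) ^ (((D.J F - D.J E : ℤ) : ℝ) * ε) := by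
      rw [← Real.rpow_add (by norm_num : (0:ℝ) < 2)]
      congr 1
      push_cast
      ring
    rw [key, mul_assoc]
    calc (2 : ℝ) ^ (((D.J E' - D.J F : ℤ) : ℝ) * ε) *
          ((2 : ℝ) ^ (((D.J F - D.J E : ℤ) : ℝ) * ε) * β E ^ 2)
        ≤ (2 : ℝ) ^ (((D.J E' - D.J F : ℤ) : ℝ) * ε) * β F ^ 2 := by
          exact mul_le_mul_of_nonneg_left hPF.2 (by positivity)
      _ ≤ β E' ^ 2 := hlt.le
  have hle' : D.J E' ≤ j := hmax _ ⟨E', hPE', rfl⟩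
  have hge : D.J F ≤ D.J E' := D.sub_gen hsub'
  have hJeq : D.J E' = D.J F := le_antisymm (hJF ▸ hle') hge
  have hEq : E' = F := (D.eq_of_sub_of_J_eq hsub' hJeq.symm).symm
  rw [hEq] at hlt
  simp at hlt

/-- Fix `ε > 0`. Say `E′` dominates `E` from above if `E ⊆ E′` and
`β(E′)² > (ℓ(E′)/ℓ(E))^ε β(E)²` (with `ℓ(E) = 2^{J(E)}`), and let `D_up` be the
cubes not dominated from above. Then there is `c(ε) > 0` such that
`Σ_{E ∈ D_up} β(E)² μ(E) ≥ c(ε) Σ_{E ∈ D} β(E)² μ(E)`. -/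
theorem sum_over_up_dominates (ε : ℝ) (hε : 0 < ε) :
    ∃ c : ℝ≥0∞, 0 < c ∧
      ∀ (ι : Type) [Countable ι] (D : AbsDyadicLattice ι) (β : ι → ℝ),
        (∀ E, β E ∈ Set.Icc (0 : ℝ) 1) →
        c * ∑' E : ι, ENNReal.ofReal ((β E) ^ 2) * D.m E ≤
          ∑' E : {E : ι // ∀ E', ¬ (D.sub E E' ∧
              (2 : ℝ) ^ (((D.J E' - D.J E : ℤ) : ℝ) * ε) * (β E) ^ 2 < (β E') ^ 2)},
            ENNReal.ofReal ((β E.1) ^ 2) * D.m E.1 := by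
  classical
  set r : ℝ≥0∞ := ENNReal.ofReal ((2 : ℝ) ^ (-ε)) with hr
  have hrlt1 : r < 1 := by
    rw [hr, ← ENNReal.ofReal_one]
    exact (ENNReal.ofReal_lt_ofReal_iff (by norm_num)).mpr
      (Real.rpow_lt_one_of_one_lt_of_neg (by norm_num) (by linarith))
  refine ⟨1 - r, tsub_pos_iff_lt.mpr hrlt1, ?_⟩
  intro ι _ D β hβ
  set t : ι → ℝ≥0∞ := fun E => ENNReal.ofReal (β E ^ 2) * D.m E with ht
  set UpT := {E : ι // ∀ E', ¬ (D.sub E E' ∧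
      (2 : ℝ) ^ (((D.J E' - D.J E : ℤ) : ℝ) * ε) * (β E) ^ 2 < (β E') ^ 2)} with hUpT
  -- Step B: choice of top dominating cube
  have key : ∀ x : {E : ι // β E ≠ 0}, ∃ p : UpT × ℕ,
      D.sub x.1 p.1.1 ∧ D.J p.1.1 = D.J x.1 + (p.2 : ℤ) ∧
      ENNReal.ofReal (β x.1 ^ 2) ≤ r ^ p.2 * ENNReal.ofReal (β p.1.1 ^ 2) := by
    intro x
    obtain ⟨F, hsub, hup, hle⟩ := exists_top D β hβ ε hε x.1 x.2
    have hgen : D.J x.1 ≤ D.J F := D.sub_gen hsub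
    set k : ℕ := (D.J F - D.J x.1).toNat with hk
    have hk' : (k : ℤ) = D.J F - D.J x.1 := Int.toNat_of_nonneg (by omega)
    have hkz : ((k : ℤ) : ℝ) = ((D.J F - D.J x.1 : ℤ) : ℝ) := congrArg Int.cast hk'
    refine ⟨(⟨F, hup⟩, k), hsub, ?_, ?_⟩
    · show D.J F = D.J x.1 + ((D.J F - D.J x.1).toNat : ℤ)
      omega
    have hrpos : (0 : ℝ) < (2 : ℝ) ^ (((D.J F - D.J x.1 : ℤ) : ℝ) * ε) :=
      Real.rpow_pos_of_pos (by norm_num) _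
    have hreal : β x.1 ^ 2 ≤ ((2 : ℝ) ^ (-ε)) ^ k * β F ^ 2 := by
      have h2 : ((2 : ℝ) ^ (-ε)) ^ k
          = ((2 : ℝ) ^ (((D.J F - D.J x.1 : ℤ) : ℝ) * ε))⁻¹ := by
        rw [← Real.rpow_natCast ((2 : ℝ) ^ (-ε)) k, ← Real.rpow_mul (by norm_num : (0:ℝ) ≤ 2),
          ← Real.rpow_neg (by norm_num : (0:ℝ) ≤ 2)]
        congr 1
        rw [← hkz]; push_cast; ring
      rw [h2, inv_mul_eq_div, le_div_iff₀ hrpos, mul_comm]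
      exact hle
    calc ENNReal.ofReal (β x.1 ^ 2) ≤ ENNReal.ofReal (((2 : ℝ) ^ (-ε)) ^ k * β F ^ 2) :=
          ENNReal.ofReal_le_ofReal hreal
      _ = r ^ k * ENNReal.ofReal (β F ^ 2) := by
          rw [ENNReal.ofReal_mul (by positivity), ENNReal.ofReal_pow (by positivity)]
  choose G hG1 hG2 hG3 using key
  -- Step A: restrict the total sum to the support
  have hA : ∑' E : ι, t E = ∑' x : {E : ι // β E ≠ 0}, t x.1 := by
    refine (tsum_subtype_eq_of_support_subset ?_).symm
    intro E hE
    simp only [Function.mem_support, ht] at hE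
    intro h0
    apply hE
    simp [h0]
  -- Step C: fiberwise decomposition
  have hC : ∑' x : {E : ι // β E ≠ 0}, t x.1
      = ∑' p : UpT × ℕ, ∑' q : {x : {E : ι // β E ≠ 0} // G x = p}, t q.1.1 := by
    rw [← (Equiv.sigmaFiberEquiv G).tsum_eq (fun x : {E : ι // β E ≠ 0} => t x.1),
      ENNReal.tsum_sigma']
    rfl
  -- Step D: bound each fiber
  have hD : ∀ p : UpT × ℕ, ∑' q : {x : {E : ι // β E ≠ 0} // G x = p}, t q.1.1
      ≤ r ^ p.2 * (ENNReal.ofReal (β p.1.1 ^ 2) * D.m p.1.1) := by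
    rintro ⟨U, k⟩
    have hJU : ∀ q : {x : {E : ι // β E ≠ 0} // G x = (U, k)},
        D.sub q.1.1 U.1 ∧ D.J q.1.1 = D.J U.1 - (k : ℤ) := by
      rintro ⟨x, hx⟩
      have h1 := hG1 x
      have h2 := hG2 x
      rw [hx] at h1 h2
      have h2' : D.J U.1 = D.J x.1 + (k : ℤ) := h2
      refine ⟨h1, ?_⟩
      show D.J x.1 = D.J U.1 - (k : ℤ)
      omega
    calc ∑' q : {x : {E : ι // β E ≠ 0} // G x = (U, k)}, t q.1.1
        ≤ ∑' q : {x : {E : ι // β E ≠ 0} // G x = (U, k)},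
            r ^ k * ENNReal.ofReal (β U.1 ^ 2) * D.m q.1.1 := by
          refine ENNReal.tsum_le_tsum fun q => ?_
          have h3 := hG3 q.1
          rw [q.2] at h3
          exact mul_le_mul_left h3 _
      _ = r ^ k * ENNReal.ofReal (β U.1 ^ 2)
            * ∑' q : {x : {E : ι // β E ≠ 0} // G x = (U, k)}, D.m q.1.1 :=
          ENNReal.tsum_mul_left
      _ ≤ r ^ k * (ENNReal.ofReal (β U.1 ^ 2) * D.m U.1) := by
          rw [mul_assoc]
          refine mul_le_mul_right (mul_le_mul_right ?_ _) _
          have hpack := D.packing U.1 (D.J U.1 - (k : ℤ)) (by omega)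
          refine le_trans ?_ hpack
          have hinj : Function.Injective
              (fun q : {x : {E : ι // β E ≠ 0} // G x = (U, k)} =>
                (⟨q.1.1, (hJU q).1, (hJU q).2⟩ :
                  {E : ι // D.sub E U.1 ∧ D.J E = D.J U.1 - (k : ℤ)})) := by
            rintro q q' h
            simp only [Subtype.mk.injEq] at h
            exact Subtype.ext (Subtype.ext h)
          exact ENNReal.tsum_comp_le_tsum_of_injective hinj
            (fun E : {E : ι // D.sub E U.1 ∧ D.J E = D.J U.1 - (k : ℤ)} => D.m E.1)
  -- Step E: sum the bound
  have hE : ∑' p : UpT × ℕ, r ^ p.2 * (ENNReal.ofReal (β p.1.1 ^ 2) * D.m p.1.1)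
      = (1 - r)⁻¹ * ∑' U : UpT, t U.1 := by
    rw [ENNReal.tsum_prod' ]
    calc ∑' (U : UpT) (k : ℕ), r ^ k * (ENNReal.ofReal (β U.1 ^ 2) * D.m U.1)
        = ∑' U : UpT, (∑' k : ℕ, r ^ k) * (ENNReal.ofReal (β U.1 ^ 2) * D.m U.1) := by
          exact tsum_congr fun U => ENNReal.tsum_mul_right
      _ = (∑' k : ℕ, r ^ k) * ∑' U : UpT, t U.1 := ENNReal.tsum_mul_left
      _ = (1 - r)⁻¹ * ∑' U : UpT, t U.1 := by rw [ENNReal.tsum_geometric]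
  have hmain : ∑' E : ι, t E ≤ (1 - r)⁻¹ * ∑' U : UpT, t U.1 := by
    rw [hA, hC, ← hE]
    exact ENNReal.tsum_le_tsum hD
  have hne0 : (1 : ℝ≥0∞) - r ≠ 0 := (tsub_pos_iff_lt.mpr hrlt1).ne'
  have hnetop : (1 : ℝ≥0∞) - r ≠ ⊤ := ENNReal.sub_ne_top ENNReal.one_ne_top
  calc (1 - r) * ∑' E : ι, t E ≤ (1 - r) * ((1 - r)⁻¹ * ∑' U : UpT, t U.1) :=
        mul_le_mul_right hmain _
    _ = ∑' U : UpT, t U.1 := by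
        rw [← mul_assoc, ENNReal.mul_inv_cancel hne0 hnetop, one_mul]
end

section
/- Let μ be a 3-Ahlfors regular vampiric measure on the first Heisenberg group ℍ (with (X,t)·(Y,s) = (X+Y, t+s+½(X₁Y₂−X₂Y₁))). Then for any 𝐗 = (X,t_X), 𝐘 = (Y,t_Y) ∈ supp μ, the point Σ_𝐗(𝐘) := (2X−Y, t_Y + X₂Y₁ − Y₂X₁) belongs to supp μ, and μ(B_r(Σ_𝐗(𝐘))) = μ(B_r(𝐘)) for all r > 0. -/
open MeasureTheory

/-- Heisenberg group product on ℍ = ℝ² × ℝ. -/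
noncomputable def hMul (p q : (ℝ × ℝ) × ℝ) : (ℝ × ℝ) × ℝ :=
  ((p.1.1 + q.1.1, p.1.2 + q.1.2),
    p.2 + q.2 + (p.1.1 * q.1.2 - p.1.2 * q.1.1) / 2)

/-- Heisenberg group inverse. -/
noncomputable def hInv (p : (ℝ × ℝ) × ℝ) : (ℝ × ℝ) × ℝ :=
  ((-p.1.1, -p.1.2), -p.2)

/-- The Heisenberg norm `‖(X,t)‖ = √(|X|² + |t|)`. -/
noncomputable def hNorm (p : (ℝ × ℝ) × ℝ) : ℝ :=
  Real.sqrt (p.1.1 ^ 2 + p.1.2 ^ 2 + |p.2|)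

/-- The left-invariant Heisenberg distance `d(𝐗,𝐘) = ‖𝐘⁻¹·𝐗‖`. -/
noncomputable def hDist (p q : (ℝ × ℝ) × ℝ) : ℝ := hNorm (hMul (hInv q) p)

/-- Heisenberg ball. -/
def hBall (p : (ℝ × ℝ) × ℝ) (r : ℝ) : Set ((ℝ × ℝ) × ℝ) := {q | hDist q p < r}

/-- Support of a measure on ℍ. -/
def hSupp (μ : Measure ((ℝ × ℝ) × ℝ)) : Set ((ℝ × ℝ) × ℝ) :=
  {p | ∀ r > (0 : ℝ), 0 < μ (hBall p r)}

/-- A measure on ℍ is vampiric if convolutions against compactly supported,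
Lipschitz, spatially odd functions vanish on its support. -/
def IsVampiricH (μ : Measure ((ℝ × ℝ) × ℝ)) : Prop :=
  ∀ ψ : (ℝ × ℝ) × ℝ → ℝ,
    (∃ K : ℝ, ∀ p q, |ψ p - ψ q| ≤ K * hDist p q) →
    HasCompactSupport ψ →
    (∀ (X : ℝ × ℝ) (t : ℝ), ψ ((-X.1, -X.2), t) = -ψ (X, t)) →
    ∀ p ∈ hSupp μ, ∫ q, ψ (hMul (hInv q) p) ∂μ = 0

/-- `3`-Ahlfors regularity with respect to Heisenberg balls. -/
def IsADR3 (C₀ : ℝ) (μ : Measure ((ℝ × ℝ) × ℝ)) : Prop :=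
  ∀ p ∈ hSupp μ, ∀ r : ℝ, 0 < r →
    ENNReal.ofReal (C₀⁻¹ * r ^ 3) ≤ μ (hBall p r) ∧
      μ (hBall p r) ≤ ENNReal.ofReal (C₀ * r ^ 3)


namespace HVampAux


abbrev H := (ℝ × ℝ) × ℝ

def hNormSq (p : H) : ℝ := p.1.1 ^ 2 + p.1.2 ^ 2 + |p.2|

lemma hNormSq_nonneg (p : H) : 0 ≤ hNormSq p := by unfold hNormSq; positivity

lemma hNorm_eq (p : H) : hNorm p = Real.sqrt (hNormSq p) := rfl

lemma hDist_eq (p q : H) : hDist p q = Real.sqrt (hNormSq (hMul (hInv q) p)) := rfl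

lemma hDist_nonneg (p q : H) : 0 ≤ hDist p q := Real.sqrt_nonneg _

lemma hDist_lt_iff {r : ℝ} (hr : 0 < r) (p q : H) :
    hDist p q < r ↔ hNormSq (hMul (hInv q) p) < r ^ 2 := by
  rw [hDist_eq]; exact Real.sqrt_lt' hr

lemma hDist_sq (p q : H) : hDist p q ^ 2 = hNormSq (hMul (hInv q) p) := by
  rw [hDist_eq]; exact Real.sq_sqrt (hNormSq_nonneg _)

def hBar (p : H) : H := ((-p.1.1, -p.1.2), p.2)

lemma hBar_hBar (p : H) : hBar (hBar p) = p := by simp [hBar]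

lemma hMul_hBar (p q : H) : hMul (hBar p) (hBar q) = hBar (hMul p q) := by
  simp only [hMul, hBar, Prod.mk.injEq]
  refine ⟨⟨by ring, by ring⟩, by ring⟩

lemma hNormSq_hBar (p : H) : hNormSq (hBar p) = hNormSq p := by
  simp [hNormSq, hBar, neg_sq]

lemma hNormSq_hInv (p : H) : hNormSq (hInv p) = hNormSq p := by
  simp [hNormSq, hInv, neg_sq, abs_neg]

lemma key_id (q Xp w : H) :
    hMul (hMul (hInv q) Xp) w = hInv (hMul (hInv (hMul Xp w)) q) := by
  simp only [hMul, hInv, Prod.mk.injEq]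
  refine ⟨⟨by ring, by ring⟩, by ring⟩

lemma chain_id (Xp p q : H) :
    hMul (hInv Xp) q = hMul (hMul (hInv Xp) p) (hMul (hInv p) q) := by
  simp only [hMul, hInv, Prod.mk.injEq]
  refine ⟨⟨by ring, by ring⟩, by ring⟩

lemma hDist_comm (p q : H) : hDist p q = hDist q p := by
  rw [hDist_eq, hDist_eq, ← hNormSq_hInv (hMul (hInv q) p)]
  congr 2
  simp only [hMul, hInv, Prod.mk.injEq]
  refine ⟨⟨by ring, by ring⟩, by ring⟩

lemma g_hBar (z w : H) : hNormSq (hMul (hBar z) w) = hNormSq (hMul z (hBar w)) := by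
  conv_lhs => rw [← hBar_hBar w]
  rw [hMul_hBar, hNormSq_hBar]

/-- clamp to [0,1] -/
def cl (x : ℝ) : ℝ := max 0 (min 1 x)

lemma cl_nonneg (x : ℝ) : 0 ≤ cl x := le_max_left _ _

lemma cl_le_one (x : ℝ) : cl x ≤ 1 := max_le (by norm_num) (min_le_left _ _)

lemma cl_eq_one {x : ℝ} (h : 1 ≤ x) : cl x = 1 := by
  simp [cl, min_eq_left h]

lemma cl_eq_zero {x : ℝ} (h : x ≤ 0) : cl x = 0 := by
  have h1 : min 1 x ≤ 0 := le_trans (min_le_right _ _) h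
  simp [cl, max_eq_left h1]

lemma pos_of_cl_ne_zero {x : ℝ} (h : cl x ≠ 0) : 0 < x := by
  by_contra h'
  push_neg at h'
  exact h (cl_eq_zero h')

lemma cl_lip (x y : ℝ) : |cl x - cl y| ≤ |x - y| := by
  rw [abs_sub_le_iff]
  constructor <;>
  · simp only [cl, max_def, min_def]
    split_ifs <;> linarith [le_abs_self (x - y), neg_abs_le (x - y), abs_nonneg (x - y)]


end HVampAux
namespace HVampAux

lemma abs_le_of_sq_le {x d : ℝ} (hd : 0 ≤ d) (h : x ^ 2 ≤ d ^ 2) : |x| ≤ d := by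
  rw [← Real.sqrt_sq_eq_abs, ← Real.sqrt_sq hd]
  exact Real.sqrt_le_sqrt h

set_option maxHeartbeats 1000000 in
lemma G_sub_le (w : H) {r : ℝ} (hr : 0 ≤ r) (z z' : H) :
    min (hNormSq (hMul z w)) (r ^ 2) - min (hNormSq (hMul z' w)) (r ^ 2)
      ≤ (r ^ 2 + 5 * r + 3 + |w.1.1| + |w.1.2|) * hDist z z' := by
  obtain ⟨⟨x1, x2⟩, x3⟩ := z
  obtain ⟨⟨a, b⟩, c⟩ := z'
  obtain ⟨⟨w1, w2⟩, w3⟩ := w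
  set d := hDist ((x1, x2), x3) ((a, b), c) with hd
  have hd0 : 0 ≤ d := hDist_nonneg _ _
  have hC0 : (0:ℝ) ≤ r ^ 2 + 5 * r + 3 + |w1| + |w2| := by
    have h1 := abs_nonneg w1
    have h2 := abs_nonneg w2
    nlinarith [sq_nonneg r]
  by_cases hg' : r ^ 2 ≤ hNormSq (hMul ((a, b), c) ((w1, w2), w3))
  · rw [min_eq_right hg']
    have h1 : min (hNormSq (hMul ((x1, x2), x3) ((w1, w2), w3))) (r ^ 2) ≤ r ^ 2 :=
      min_le_right _ _
    nlinarith
  · push_neg at hg'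
    by_cases hd1 : 1 ≤ d
    · have h1 : min (hNormSq (hMul ((x1, x2), x3) ((w1, w2), w3))) (r ^ 2) ≤ r ^ 2 :=
        min_le_right _ _
      have h2 : 0 ≤ min (hNormSq (hMul ((a, b), c) ((w1, w2), w3))) (r ^ 2) :=
        le_min (hNormSq_nonneg _) (by positivity)
      have h3 : (r ^ 2 + 5 * r + 3 + |w1| + |w2|) * 1
          ≤ (r ^ 2 + 5 * r + 3 + |w1| + |w2|) * d :=
        mul_le_mul_of_nonneg_left hd1 hC0
      have h4 := abs_nonneg w1
      have h5 := abs_nonneg w2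
      nlinarith [sq_nonneg r]
    · push_neg at hd1
      rw [min_eq_left hg'.le]
      have hmain : hNormSq (hMul ((x1, x2), x3) ((w1, w2), w3))
          - hNormSq (hMul ((a, b), c) ((w1, w2), w3))
          ≤ (r ^ 2 + 5 * r + 3 + |w1| + |w2|) * d := by
        set p := x1 - a with hp'
        set q := x2 - b with hq'
        set s := x3 - c - (a * x2 - b * x1) / 2 with hs'
        have hd2 : p ^ 2 + q ^ 2 + |s| = d ^ 2 := by
          have h := (hDist_sq ((x1, x2), x3) ((a, b), c)).symm
          rw [← hd] at h
          simp only [hNormSq, hMul, hInv] at h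
          calc p ^ 2 + q ^ 2 + |s|
              = (-a + x1) ^ 2 + (-b + x2) ^ 2 + |(-c + x3 + (-a * x2 - -b * x1) / 2)| := by
                rw [show (-c + x3 + (-a * x2 - -b * x1) / 2 : ℝ) = s by rw [hs']; ring]
                ring
            _ = d ^ 2 := h
        have hpd : p ^ 2 ≤ d ^ 2 := by nlinarith [abs_nonneg s, sq_nonneg q]
        have hqd : q ^ 2 ≤ d ^ 2 := by nlinarith [abs_nonneg s, sq_nonneg p]
        have hp1 : |p| ≤ d := abs_le_of_sq_le hd0 hpd
        have hq1 : |q| ≤ d := abs_le_of_sq_le hd0 hqd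
        have hs1 : |s| ≤ d ^ 2 := by nlinarith [sq_nonneg p, sq_nonneg q]
        simp only [hNormSq, hMul] at hg' ⊢
        have ha1 : |a + w1| ≤ r := by
          apply abs_le_of_sq_le hr
          nlinarith [abs_nonneg (c + w3 + (a * w2 - b * w1) / 2), sq_nonneg (b + w2)]
        have hb1 : |b + w2| ≤ r := by
          apply abs_le_of_sq_le hr
          nlinarith [abs_nonneg (c + w3 + (a * w2 - b * w1) / 2), sq_nonneg (a + w1)]
        have haa : |a| ≤ r + |w1| := by
          have h1 : |a| ≤ |a + w1| + |w1| := by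
            calc |a| = |(a + w1) + (-w1)| := by ring_nf
              _ ≤ |a + w1| + |(-w1)| := abs_add_le _ _
              _ = |a + w1| + |w1| := by rw [abs_neg]
          linarith
        have hbb : |b| ≤ r + |w2| := by
          have h1 : |b| ≤ |b + w2| + |w2| := by
            calc |b| = |(b + w2) + (-w2)| := by ring_nf
              _ ≤ |b + w2| + |(-w2)| := abs_add_le _ _
              _ = |b + w2| + |w2| := by rw [abs_neg]
          linarith
        -- the t-components
        set T := x3 + w3 + (x1 * w2 - x2 * w1) / 2 with hT'
        set T' := c + w3 + (a * w2 - b * w1) / 2 with hT''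
        have hTT : T - T' = s + (a * q - b * p) / 2 + (p * w2 - q * w1) / 2 := by
          rw [hT', hT'', hs', hp', hq']; ring
        have habs : |T| - |T'| ≤ |T - T'| := abs_sub_abs_le_abs_sub _ _
        have h2 : |T - T'| ≤ |s| + (|a| * |q| + |b| * |p|) / 2 + (|p| * |w2| + |q| * |w1|) / 2 := by
          rw [hTT]
          calc |s + (a * q - b * p) / 2 + (p * w2 - q * w1) / 2|
              ≤ |s + (a * q - b * p) / 2| + |(p * w2 - q * w1) / 2| := abs_add_le _ _
            _ ≤ |s| + |(a * q - b * p) / 2| + |(p * w2 - q * w1) / 2| := by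
                linarith [abs_add_le s ((a * q - b * p) / 2)]
            _ ≤ |s| + (|a| * |q| + |b| * |p|) / 2 + (|p| * |w2| + |q| * |w1|) / 2 := by
                rw [abs_div, abs_div]
                have e1 : |a * q - b * p| ≤ |a| * |q| + |b| * |p| := by
                  calc |a * q - b * p| ≤ |a * q| + |b * p| := abs_sub _ _
                    _ = |a| * |q| + |b| * |p| := by rw [abs_mul, abs_mul]
                have e2 : |p * w2 - q * w1| ≤ |p| * |w2| + |q| * |w1| := by
                  calc |p * w2 - q * w1| ≤ |p * w2| + |q * w1| := abs_sub _ _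
                    _ = |p| * |w2| + |q| * |w1| := by rw [abs_mul, abs_mul]
                rw [abs_two]
                linarith
        have M1 : p * (a + w1) ≤ d * r :=
          le_trans (le_abs_self _)
            (by rw [abs_mul]; exact mul_le_mul hp1 ha1 (abs_nonneg _) hd0)
        have M2 : q * (b + w2) ≤ d * r :=
          le_trans (le_abs_self _)
            (by rw [abs_mul]; exact mul_le_mul hq1 hb1 (abs_nonneg _) hd0)
        have A1 : |a| * |q| ≤ (r + |w1|) * d :=
          mul_le_mul haa hq1 (abs_nonneg _) (by positivity)
        have A2 : |b| * |p| ≤ (r + |w2|) * d :=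
          mul_le_mul hbb hp1 (abs_nonneg _) (by positivity)
        have A3 : |p| * |w2| ≤ d * |w2| := mul_le_mul_of_nonneg_right hp1 (abs_nonneg _)
        have A4 : |q| * |w1| ≤ d * |w1| := mul_le_mul_of_nonneg_right hq1 (abs_nonneg _)
        have hdd : d ^ 2 ≤ d := by nlinarith
        have hgoal : (x1 + w1) ^ 2 + (x2 + w2) ^ 2 + |T|
            - ((a + w1) ^ 2 + (b + w2) ^ 2 + |T'|)
            = (p ^ 2 + 2 * p * (a + w1)) + (q ^ 2 + 2 * q * (b + w2)) + (|T| - |T'|) := by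
          rw [hp', hq']; ring
        have hr2d : 0 ≤ r ^ 2 * d := mul_nonneg (sq_nonneg r) hd0
        linarith [hgoal, habs, h2, hs1, hdd, M1, M2, A1, A2, A3, A4, hpd, hqd, hr2d]
      linarith [min_le_left (hNormSq (hMul ((x1, x2), x3) ((w1, w2), w3))) (r ^ 2)]

end HVampAux

namespace HVampAux

lemma G_abs_le (w : H) {r : ℝ} (hr : 0 ≤ r) (z z' : H) :
    |min (hNormSq (hMul z w)) (r ^ 2) - min (hNormSq (hMul z' w)) (r ^ 2)|
      ≤ (r ^ 2 + 5 * r + 3 + |w.1.1| + |w.1.2|) * hDist z z' := by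
  rw [abs_sub_le_iff]
  refine ⟨G_sub_le w hr z z', ?_⟩
  rw [hDist_comm]
  exact G_sub_le w hr z' z

noncomputable def phiF (n : ℕ) (r : ℝ) (w z : H) : ℝ :=
  cl ((n + 1 : ℝ) * (r ^ 2 - min (hNormSq (hMul z w)) (r ^ 2)))

lemma phiF_nonneg (n : ℕ) (r : ℝ) (w z : H) : 0 ≤ phiF n r w z := cl_nonneg _

lemma phiF_le_one (n : ℕ) (r : ℝ) (w z : H) : phiF n r w z ≤ 1 := cl_le_one _

lemma phiF_lip (n : ℕ) {r : ℝ} (hr : 0 ≤ r) (w : H) (z z' : H) :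
    |phiF n r w z - phiF n r w z'|
      ≤ ((n + 1 : ℝ) * (r ^ 2 + 5 * r + 3 + |w.1.1| + |w.1.2|)) * hDist z z' := by
  have h1 := cl_lip ((n + 1 : ℝ) * (r ^ 2 - min (hNormSq (hMul z w)) (r ^ 2)))
      ((n + 1 : ℝ) * (r ^ 2 - min (hNormSq (hMul z' w)) (r ^ 2)))
  have h2 : ((n + 1 : ℝ) * (r ^ 2 - min (hNormSq (hMul z w)) (r ^ 2)))
      - ((n + 1 : ℝ) * (r ^ 2 - min (hNormSq (hMul z' w)) (r ^ 2)))
      = (n + 1 : ℝ) * (min (hNormSq (hMul z' w)) (r ^ 2)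
          - min (hNormSq (hMul z w)) (r ^ 2)) := by ring
  calc |phiF n r w z - phiF n r w z'|
      ≤ |((n + 1 : ℝ) * (r ^ 2 - min (hNormSq (hMul z w)) (r ^ 2)))
          - ((n + 1 : ℝ) * (r ^ 2 - min (hNormSq (hMul z' w)) (r ^ 2)))| := h1
    _ = (n + 1 : ℝ) * |min (hNormSq (hMul z' w)) (r ^ 2)
          - min (hNormSq (hMul z w)) (r ^ 2)| := by
        rw [h2, abs_mul, abs_of_nonneg (by positivity : (0:ℝ) ≤ (n + 1 : ℝ))]
    _ ≤ (n + 1 : ℝ) * ((r ^ 2 + 5 * r + 3 + |w.1.1| + |w.1.2|) * hDist z z') := by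
        apply mul_le_mul_of_nonneg_left _ (by positivity : (0:ℝ) ≤ (n + 1 : ℝ))
        rw [hDist_comm]
        exact G_abs_le w hr z' z
    _ = ((n + 1 : ℝ) * (r ^ 2 + 5 * r + 3 + |w.1.1| + |w.1.2|)) * hDist z z' := by ring

lemma phiF_eq_one (n : ℕ) {r : ℝ} {w z : H}
    (h : hNormSq (hMul z w) ≤ r ^ 2 - 1 / (n + 1)) : phiF n r w z = 1 := by
  have hn : (0:ℝ) < (n : ℝ) + 1 := by positivity
  have hg : hNormSq (hMul z w) ≤ r ^ 2 := by
    have : (0:ℝ) < 1 / ((n : ℝ) + 1) := by positivity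
    linarith
  unfold phiF
  rw [min_eq_left hg]
  apply cl_eq_one
  have h' : 1 / ((n : ℝ) + 1) ≤ r ^ 2 - hNormSq (hMul z w) := by linarith
  rw [div_le_iff₀ hn] at h'
  nlinarith

lemma phiF_eq_zero (n : ℕ) {r : ℝ} {w z : H}
    (h : r ^ 2 ≤ hNormSq (hMul z w)) : phiF n r w z = 0 := by
  unfold phiF
  rw [min_eq_right h]
  apply cl_eq_zero
  simp

lemma lt_of_phiF_ne_zero {n : ℕ} {r : ℝ} {w z : H}
    (h : phiF n r w z ≠ 0) : hNormSq (hMul z w) < r ^ 2 := by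
  by_contra h'
  push_neg at h'
  exact h (phiF_eq_zero n h')

lemma phiF_hBar (n : ℕ) (r : ℝ) (w z : H) :
    phiF n r w (hBar z) = phiF n r (hBar w) z := by
  unfold phiF
  rw [g_hBar]

lemma g_u (Xp w q : H) :
    hNormSq (hMul (hMul (hInv q) Xp) w) = hNormSq (hMul (hInv (hMul Xp w)) q) := by
  rw [key_id, hNormSq_hInv]

lemma hBall_empty {p : H} {r : ℝ} (hr : r ≤ 0) : hBall p r = ∅ := by
  ext q
  simp only [hBall, Set.mem_setOf_eq, Set.mem_empty_iff_false, iff_false, not_lt]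
  linarith [hDist_nonneg q p]

lemma continuous_gP (P : H) : Continuous fun q : H => hNormSq (hMul (hInv P) q) := by
  unfold hNormSq hMul hInv
  fun_prop

lemma continuous_hDistP (P : H) : Continuous fun q : H => hDist q P := by
  unfold hDist hNorm hMul hInv
  fun_prop

lemma isOpen_hBall (P : H) (r : ℝ) : IsOpen (hBall P r) :=
  isOpen_Iio.preimage (continuous_hDistP P)

lemma measurableSet_hBall (P : H) (r : ℝ) : MeasurableSet (hBall P r) :=
  (isOpen_hBall P r).measurableSet

lemma continuous_f1 (n : ℕ) (r : ℝ) (w Xp : H) :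
    Continuous fun q : H => phiF n r w (hMul (hInv q) Xp) := by
  unfold phiF cl hNormSq hMul hInv
  fun_prop

set_option maxHeartbeats 800000 in
lemma measure_hBall_lt_top {C₀ : ℝ} {μ : Measure H} (hADR : IsADR3 C₀ μ) {Xp : H}
    (hX : Xp ∈ hSupp μ) (p : H) (ρ : ℝ) : μ (hBall p ρ) < ⊤ := by
  rcases le_or_gt ρ 0 with h | h
  · rw [hBall_empty h]; simp
  · set v := hMul (hInv Xp) p with hv
    set B := (|v.1.1| + ρ) ^ 2 + (|v.1.2| + ρ) ^ 2 + |v.2| + ρ ^ 2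
        + (|v.1.1| + |v.1.2|) * ρ + 1 with hB
    have hB0 : 0 < B := by positivity
    have hR0 : 0 < Real.sqrt B := Real.sqrt_pos.2 hB0
    have hsub : hBall p ρ ⊆ hBall Xp (Real.sqrt B) := by
      intro q hq
      have h1 : hNormSq (hMul (hInv p) q) < ρ ^ 2 := (hDist_lt_iff h q p).1 hq
      show hDist q Xp < Real.sqrt B
      rw [hDist_eq]
      apply Real.sqrt_lt_sqrt (hNormSq_nonneg _)
      rw [chain_id Xp p q, ← hv]
      set h' := hMul (hInv p) q with hh'
      have hn := h1
      unfold hNormSq at hn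
      have e1 : |h'.1.1| ≤ ρ := by
        apply abs_le_of_sq_le h.le
        nlinarith [abs_nonneg h'.2, sq_nonneg h'.1.2]
      have e2 : |h'.1.2| ≤ ρ := by
        apply abs_le_of_sq_le h.le
        nlinarith [abs_nonneg h'.2, sq_nonneg h'.1.1]
      have e3 : |h'.2| ≤ ρ ^ 2 := by nlinarith [sq_nonneg h'.1.1, sq_nonneg h'.1.2]
      simp only [hNormSq, hMul]
      have t1 : (v.1.1 + h'.1.1) ^ 2 ≤ (|v.1.1| + ρ) ^ 2 := by
        have hA : |v.1.1 + h'.1.1| ≤ |v.1.1| + ρ := (abs_add_le _ _).trans (by linarith)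
        nlinarith [abs_nonneg (v.1.1 + h'.1.1), sq_abs (v.1.1 + h'.1.1)]
      have t2 : (v.1.2 + h'.1.2) ^ 2 ≤ (|v.1.2| + ρ) ^ 2 := by
        have hA : |v.1.2 + h'.1.2| ≤ |v.1.2| + ρ := (abs_add_le _ _).trans (by linarith)
        nlinarith [abs_nonneg (v.1.2 + h'.1.2), sq_abs (v.1.2 + h'.1.2)]
      have t3 : |v.2 + h'.2 + (v.1.1 * h'.1.2 - v.1.2 * h'.1.1) / 2|
          ≤ |v.2| + ρ ^ 2 + (|v.1.1| + |v.1.2|) * ρ := by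
        have u1 : |v.2 + h'.2 + (v.1.1 * h'.1.2 - v.1.2 * h'.1.1) / 2|
            ≤ |v.2| + |h'.2| + |v.1.1 * h'.1.2 - v.1.2 * h'.1.1| / 2 := by
          calc |v.2 + h'.2 + (v.1.1 * h'.1.2 - v.1.2 * h'.1.1) / 2|
              ≤ |v.2 + h'.2| + |(v.1.1 * h'.1.2 - v.1.2 * h'.1.1) / 2| := abs_add_le _ _
            _ ≤ |v.2| + |h'.2| + |v.1.1 * h'.1.2 - v.1.2 * h'.1.1| / 2 := by
                rw [abs_div, abs_two]
                linarith [abs_add_le v.2 h'.2]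
        have u2 : |v.1.1 * h'.1.2 - v.1.2 * h'.1.1| ≤ |v.1.1| * ρ + |v.1.2| * ρ := by
          calc |v.1.1 * h'.1.2 - v.1.2 * h'.1.1|
              ≤ |v.1.1 * h'.1.2| + |v.1.2 * h'.1.1| := abs_sub _ _
            _ = |v.1.1| * |h'.1.2| + |v.1.2| * |h'.1.1| := by rw [abs_mul, abs_mul]
            _ ≤ |v.1.1| * ρ + |v.1.2| * ρ := by
                have := mul_le_mul_of_nonneg_left e2 (abs_nonneg v.1.1)
                have := mul_le_mul_of_nonneg_left e1 (abs_nonneg v.1.2)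
                linarith
        have n1 : 0 ≤ |v.1.1| * ρ := mul_nonneg (abs_nonneg _) h.le
        have n2 : 0 ≤ |v.1.2| * ρ := mul_nonneg (abs_nonneg _) h.le
        linarith
      linarith
    calc μ (hBall p ρ) ≤ μ (hBall Xp (Real.sqrt B)) := measure_mono hsub
      _ ≤ ENNReal.ofReal (C₀ * Real.sqrt B ^ 3) := (hADR Xp hX _ hR0).2
      _ < ⊤ := ENNReal.ofReal_lt_top

end HVampAux

namespace HVampAux

lemma coord_bound {w x : H} {r : ℝ} (hr : 0 ≤ r) (h : hNormSq (hMul x w) ≤ r ^ 2) :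
    |x.1.1| ≤ r + |w.1.1| ∧ |x.1.2| ≤ r + |w.1.2| ∧
      |x.2| ≤ r ^ 2 + |w.2| + (r + |w.1.1|) * |w.1.2| + (r + |w.1.2|) * |w.1.1| := by
  unfold hNormSq hMul at h
  have h1 : |x.1.1 + w.1.1| ≤ r := by
    apply abs_le_of_sq_le hr
    nlinarith [abs_nonneg (x.2 + w.2 + (x.1.1 * w.1.2 - x.1.2 * w.1.1) / 2),
      sq_nonneg (x.1.2 + w.1.2)]
  have h2 : |x.1.2 + w.1.2| ≤ r := by
    apply abs_le_of_sq_le hr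
    nlinarith [abs_nonneg (x.2 + w.2 + (x.1.1 * w.1.2 - x.1.2 * w.1.1) / 2),
      sq_nonneg (x.1.1 + w.1.1)]
  have hx1 : |x.1.1| ≤ r + |w.1.1| := by
    have := abs_add_le (x.1.1 + w.1.1) (-w.1.1)
    simp only [add_neg_cancel_right, abs_neg] at this
    linarith
  have hx2 : |x.1.2| ≤ r + |w.1.2| := by
    have := abs_add_le (x.1.2 + w.1.2) (-w.1.2)
    simp only [add_neg_cancel_right, abs_neg] at this
    linarith
  refine ⟨hx1, hx2, ?_⟩
  have h3 : |x.2 + w.2 + (x.1.1 * w.1.2 - x.1.2 * w.1.1) / 2| ≤ r ^ 2 := by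
    nlinarith [sq_nonneg (x.1.1 + w.1.1), sq_nonneg (x.1.2 + w.1.2)]
  have h4 : |x.2| ≤ |x.2 + w.2 + (x.1.1 * w.1.2 - x.1.2 * w.1.1) / 2| + |w.2|
      + |x.1.1 * w.1.2 - x.1.2 * w.1.1| / 2 := by
    have := abs_add_le (x.2 + w.2 + (x.1.1 * w.1.2 - x.1.2 * w.1.1) / 2)
      (-(w.2 + (x.1.1 * w.1.2 - x.1.2 * w.1.1) / 2))
    simp only [abs_neg] at this
    have e : x.2 + w.2 + (x.1.1 * w.1.2 - x.1.2 * w.1.1) / 2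
        + -(w.2 + (x.1.1 * w.1.2 - x.1.2 * w.1.1) / 2) = x.2 := by ring
    rw [e] at this
    have e2 : |w.2 + (x.1.1 * w.1.2 - x.1.2 * w.1.1) / 2|
        ≤ |w.2| + |x.1.1 * w.1.2 - x.1.2 * w.1.1| / 2 := by
      have := abs_add_le w.2 ((x.1.1 * w.1.2 - x.1.2 * w.1.1) / 2)
      rw [abs_div, abs_two] at this
      linarith
    linarith
  have h5 : |x.1.1 * w.1.2 - x.1.2 * w.1.1| ≤ (r + |w.1.1|) * |w.1.2| + (r + |w.1.2|) * |w.1.1| := by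
    calc |x.1.1 * w.1.2 - x.1.2 * w.1.1| ≤ |x.1.1 * w.1.2| + |x.1.2 * w.1.1| := abs_sub _ _
      _ = |x.1.1| * |w.1.2| + |x.1.2| * |w.1.1| := by rw [abs_mul, abs_mul]
      _ ≤ (r + |w.1.1|) * |w.1.2| + (r + |w.1.2|) * |w.1.1| := by
          have := mul_le_mul_of_nonneg_right hx1 (abs_nonneg w.1.2)
          have := mul_le_mul_of_nonneg_right hx2 (abs_nonneg w.1.1)
          linarith
  have n1 : 0 ≤ (r + |w.1.1|) * |w.1.2| := by positivity
  have n2 : 0 ≤ (r + |w.1.2|) * |w.1.1| := by positivity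
  linarith

set_option maxHeartbeats 1600000 in
lemma le_aux {C₀ : ℝ} {μ : Measure ((ℝ × ℝ) × ℝ)} (hvamp : IsVampiricH μ)
    (hADR : IsADR3 C₀ μ) {Xp : H} (hX : Xp ∈ hSupp μ) (w : H) {r : ℝ} (hr : 0 < r) :
    μ (hBall (hMul Xp w) r) ≤ μ (hBall (hMul Xp (hBar w)) r) := by
  set P := hMul Xp w with hP
  set Q := hMul Xp (hBar w) with hQ
  have finP : μ (hBall P r) < ⊤ := measure_hBall_lt_top hADR hX P r
  have finQ : μ (hBall Q r) < ⊤ := measure_hBall_lt_top hADR hX Q r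
  set S : ℕ → Set H := fun n => {q | hNormSq (hMul (hInv P) q) ≤ r ^ 2 - 1 / (n + 1)} with hS
  have hSsub : ∀ n, S n ⊆ hBall P r := by
    intro n q hq
    have hq' : hNormSq (hMul (hInv P) q) ≤ r ^ 2 - 1 / ((n : ℝ) + 1) := hq
    have h0 : (0:ℝ) < 1 / ((n : ℝ) + 1) := by positivity
    exact (hDist_lt_iff hr q P).2 (by linarith)
  have hSmeas : ∀ n, MeasurableSet (S n) := fun n =>
    (continuous_gP P).measurable measurableSet_Iic
  have hSmono : Monotone S := by
    intro m n hmn q hq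
    have hq' : hNormSq (hMul (hInv P) q) ≤ r ^ 2 - 1 / ((m : ℝ) + 1) := hq
    have h1 : (1:ℝ) / ((n : ℝ) + 1) ≤ 1 / ((m : ℝ) + 1) := by
      apply one_div_le_one_div_of_le (by positivity)
      have : (m : ℝ) ≤ (n : ℝ) := Nat.cast_le.2 hmn
      linarith
    show hNormSq (hMul (hInv P) q) ≤ r ^ 2 - 1 / ((n : ℝ) + 1)
    linarith
  have hSunion : ⋃ n, S n = hBall P r := by
    apply Set.Subset.antisymm (Set.iUnion_subset hSsub)
    intro q hq
    have h1 : hNormSq (hMul (hInv P) q) < r ^ 2 := (hDist_lt_iff hr q P).1 hq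
    obtain ⟨n, hn⟩ := exists_nat_one_div_lt (sub_pos.2 h1)
    exact Set.mem_iUnion.2 ⟨n, show hNormSq (hMul (hInv P) q) ≤ r ^ 2 - 1 / ((n : ℝ) + 1) by
      linarith⟩
  have key : ∀ n : ℕ, μ (S n) ≤ μ (hBall Q r) := by
    intro n
    set wb := hBar w with hwb
    set ψ : H → ℝ := fun z => phiF n r w z - phiF n r wb z with hψ
    have hlip : ∃ K : ℝ, ∀ p q, |ψ p - ψ q| ≤ K * hDist p q := by
      refine ⟨(n + 1 : ℝ) * (r ^ 2 + 5 * r + 3 + |w.1.1| + |w.1.2|)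
        + (n + 1 : ℝ) * (r ^ 2 + 5 * r + 3 + |wb.1.1| + |wb.1.2|), fun p q => ?_⟩
      have l1 := phiF_lip n hr.le w p q
      have l2 := phiF_lip n hr.le wb p q
      have l3 : |ψ p - ψ q|
          ≤ |phiF n r w p - phiF n r w q| + |phiF n r wb p - phiF n r wb q| := by
        rw [hψ]
        calc |phiF n r w p - phiF n r wb p - (phiF n r w q - phiF n r wb q)|
            = |(phiF n r w p - phiF n r w q) - (phiF n r wb p - phiF n r wb q)| := by
              ring_nf
          _ ≤ _ := abs_sub _ _
      linarith
    have hcs : HasCompactSupport ψ := by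
      set M := (r + |w.1.1| + |w.1.2|)
        + (r ^ 2 + |w.2| + (r + |w.1.1|) * |w.1.2| + (r + |w.1.2|) * |w.1.1|) with hM
      apply HasCompactSupport.intro (isCompact_closedBall (0 : H) M)
      intro x hx
      by_contra hne
      apply hx
      have hbd : hNormSq (hMul x w) ≤ r ^ 2 ∨ hNormSq (hMul x wb) ≤ r ^ 2 := by
        by_contra hcon
        push_neg at hcon
        apply hne
        show phiF n r w x - phiF n r wb x = 0
        rw [phiF_eq_zero n hcon.1.le, phiF_eq_zero n hcon.2.le, sub_self]
      have hwc1 : |wb.1.1| = |w.1.1| := by rw [hwb]; simp [hBar]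
      have hwc2 : |wb.1.2| = |w.1.2| := by rw [hwb]; simp [hBar]
      have hwc3 : wb.2 = w.2 := by rw [hwb]; rfl
      have hxb : |x.1.1| ≤ r + |w.1.1| ∧ |x.1.2| ≤ r + |w.1.2| ∧
          |x.2| ≤ r ^ 2 + |w.2| + (r + |w.1.1|) * |w.1.2| + (r + |w.1.2|) * |w.1.1| := by
        rcases hbd with hb | hb
        · exact coord_bound hr.le hb
        · have := coord_bound hr.le hb
          rwa [hwc1, hwc2, hwc3] at this
      rw [Metric.mem_closedBall]
      have hd : dist x (0 : H) = max (max |x.1.1| |x.1.2|) |x.2| := by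
        rw [dist_zero_right, Prod.norm_def, Prod.norm_def]
        simp [Real.norm_eq_abs]
      rw [hd]
      have n1 : 0 ≤ (r + |w.1.1|) * |w.1.2| := by positivity
      have n2 : 0 ≤ (r + |w.1.2|) * |w.1.1| := by positivity
      have n3 := abs_nonneg w.1.1
      have n4 := abs_nonneg w.1.2
      have n5 := abs_nonneg w.2
      have n6 := sq_nonneg r
      refine max_le (max_le ?_ ?_) ?_ <;> rw [hM] <;> linarith [hxb.1, hxb.2.1, hxb.2.2]
    have hodd : ∀ (Z : ℝ × ℝ) (t : ℝ), ψ ((-Z.1, -Z.2), t) = -ψ (Z, t) := by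
      intro Z t
      show phiF n r w (hBar (Z, t)) - phiF n r wb (hBar (Z, t))
        = -(phiF n r w (Z, t) - phiF n r wb (Z, t))
      rw [phiF_hBar, phiF_hBar, ← hwb, hwb, hBar_hBar, ← hwb]
      ring
    have hzero := hvamp ψ hlip hcs hodd Xp hX
    set f1 : H → ℝ := fun q => phiF n r w (hMul (hInv q) Xp) with hf1
    set f2 : H → ℝ := fun q => phiF n r wb (hMul (hInv q) Xp) with hf2
    have hgid1 : ∀ q, hNormSq (hMul (hMul (hInv q) Xp) w) = hNormSq (hMul (hInv P) q) :=
      fun q => by rw [g_u, ← hP]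
    have hgid2 : ∀ q, hNormSq (hMul (hMul (hInv q) Xp) wb) = hNormSq (hMul (hInv Q) q) :=
      fun q => by rw [g_u, hwb, ← hQ]
    have hvan1 : ∀ q, q ∉ hBall P r → f1 q = 0 := by
      intro q hq
      rw [hf1]; dsimp only
      apply phiF_eq_zero
      rw [hgid1 q]
      by_contra hlt; push_neg at hlt
      exact hq ((hDist_lt_iff hr q P).2 hlt)
    have hvan2 : ∀ q, q ∉ hBall Q r → f2 q = 0 := by
      intro q hq
      rw [hf2]; dsimp only
      apply phiF_eq_zero
      rw [hgid2 q]
      by_contra hlt; push_neg at hlt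
      exact hq ((hDist_lt_iff hr q Q).2 hlt)
    have hIndP : Integrable ((hBall P r).indicator fun _ => (1:ℝ)) μ :=
      (integrable_indicator_iff (measurableSet_hBall P r)).2
        (integrableOn_const finP.ne)
    have hIndQ : Integrable ((hBall Q r).indicator fun _ => (1:ℝ)) μ :=
      (integrable_indicator_iff (measurableSet_hBall Q r)).2
        (integrableOn_const finQ.ne)
    have hm1 : Integrable f1 μ := by
      apply Integrable.mono' hIndP (continuous_f1 n r w Xp).aestronglyMeasurable
      refine Filter.Eventually.of_forall fun q => ?_
      by_cases hq : q ∈ hBall P r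
      · rw [Set.indicator_of_mem hq, Real.norm_eq_abs,
          abs_of_nonneg (phiF_nonneg _ _ _ _)]
        exact phiF_le_one _ _ _ _
      · rw [Set.indicator_of_notMem hq,
          show phiF n r w (hMul (hInv q) Xp) = 0 from hvan1 q hq]
        simp
    have hm2 : Integrable f2 μ := by
      apply Integrable.mono' hIndQ (continuous_f1 n r wb Xp).aestronglyMeasurable
      refine Filter.Eventually.of_forall fun q => ?_
      by_cases hq : q ∈ hBall Q r
      · rw [Set.indicator_of_mem hq, Real.norm_eq_abs,
          abs_of_nonneg (phiF_nonneg _ _ _ _)]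
        exact phiF_le_one _ _ _ _
      · rw [Set.indicator_of_notMem hq,
          show phiF n r wb (hMul (hInv q) Xp) = 0 from hvan2 q hq]
        simp
    have hint : ∫ q, f1 q ∂μ = ∫ q, f2 q ∂μ := by
      have h0 : ∫ q, (f1 q - f2 q) ∂μ = 0 := hzero
      rw [integral_sub hm1 hm2] at h0
      linarith
    have hIndS : Integrable ((S n).indicator fun _ => (1:ℝ)) μ :=
      (integrable_indicator_iff (hSmeas n)).2
        (integrableOn_const (lt_of_le_of_lt (measure_mono (hSsub n)) finP).ne)
    have hlow : (μ (S n)).toReal ≤ ∫ q, f1 q ∂μ := by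
      rw [← measureReal_def, ← integral_indicator_one (hSmeas n)]
      apply integral_mono hIndS hm1
      intro q
      by_cases hq : q ∈ S n
      · rw [Set.indicator_of_mem hq]
        have h1 : phiF n r w (hMul (hInv q) Xp) = 1 := by
          apply phiF_eq_one
          rw [hgid1 q]
          exact hq
        rw [hf1]; dsimp only
        rw [h1]
      · rw [Set.indicator_of_notMem hq]
        exact phiF_nonneg _ _ _ _
    have hupp : ∫ q, f2 q ∂μ ≤ (μ (hBall Q r)).toReal := by
      rw [← measureReal_def, ← integral_indicator_one (measurableSet_hBall Q r)]
      apply integral_mono hm2 hIndQ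
      intro q
      by_cases hq : q ∈ hBall Q r
      · rw [Set.indicator_of_mem hq]
        exact phiF_le_one _ _ _ _
      · rw [Set.indicator_of_notMem hq, hvan2 q hq]
    have hfinal : (μ (S n)).toReal ≤ (μ (hBall Q r)).toReal := by linarith
    exact (ENNReal.toReal_le_toReal
      (ne_of_lt (lt_of_le_of_lt (measure_mono (hSsub n)) finP)) (ne_of_lt finQ)).1 hfinal
  calc μ (hBall P r) = μ (⋃ n, S n) := by rw [hSunion]
    _ = ⨆ n, μ (S n) := Directed.measure_iUnion hSmono.directed_le
    _ ≤ μ (hBall Q r) := iSup_le key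

lemma ball_eq {C₀ : ℝ} {μ : Measure ((ℝ × ℝ) × ℝ)} (hvamp : IsVampiricH μ)
    (hADR : IsADR3 C₀ μ) {Xp : H} (hX : Xp ∈ hSupp μ) (w : H) {r : ℝ} (hr : 0 < r) :
    μ (hBall (hMul Xp w) r) = μ (hBall (hMul Xp (hBar w)) r) := by
  refine le_antisymm (le_aux hvamp hADR hX w hr) ?_
  have h := le_aux hvamp hADR hX (hBar w) hr
  rwa [hBar_hBar] at h

end HVampAux

/-- For a 3-Ahlfors regular vampiric measure `μ` on the first Heisenberg group,
and `𝐗 = (X,t_X)`, `𝐘 = (Y,t_Y)` in `supp μ`, the point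
`Σ_𝐗(𝐘) = (2X−Y, t_Y + X₂Y₁ − Y₂X₁)` belongs to `supp μ`, and
`μ(B_r(Σ_𝐗(𝐘))) = μ(B_r(𝐘))` for all `r > 0`. -/
theorem heisenberg_vampiric_symmetry (C₀ : ℝ) (hC₀ : 1 ≤ C₀)
    (μ : Measure ((ℝ × ℝ) × ℝ)) (hvamp : IsVampiricH μ) (hADR : IsADR3 C₀ μ)
    (X Y : ℝ × ℝ) (tX tY : ℝ)
    (hX : ((X, tX) : (ℝ × ℝ) × ℝ) ∈ hSupp μ)
    (hY : ((Y, tY) : (ℝ × ℝ) × ℝ) ∈ hSupp μ) :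
    (((2 * X.1 - Y.1, 2 * X.2 - Y.2), tY + X.2 * Y.1 - Y.2 * X.1) : (ℝ × ℝ) × ℝ)
        ∈ hSupp μ ∧
    ∀ r > (0 : ℝ),
      μ (hBall ((2 * X.1 - Y.1, 2 * X.2 - Y.2), tY + X.2 * Y.1 - Y.2 * X.1) r) =
        μ (hBall (Y, tY) r) := by
  obtain ⟨X1, X2⟩ := X
  obtain ⟨Y1, Y2⟩ := Y
  set w := hMul (hInv ((X1, X2), tX)) ((Y1, Y2), tY) with hw
  have h1 : hMul ((X1, X2), tX) w = ((Y1, Y2), tY) := by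
    rw [hw]
    simp only [hMul, hInv, Prod.mk.injEq]
    refine ⟨⟨by ring, by ring⟩, by ring⟩
  have h2 : hMul ((X1, X2), tX) (HVampAux.hBar w)
      = ((2 * X1 - Y1, 2 * X2 - Y2), tY + X2 * Y1 - Y2 * X1) := by
    rw [hw]
    simp only [hMul, hInv, HVampAux.hBar, Prod.mk.injEq]
    refine ⟨⟨by ring, by ring⟩, by ring⟩
  have hmain : ∀ r > (0 : ℝ),
      μ (hBall ((2 * X1 - Y1, 2 * X2 - Y2), tY + X2 * Y1 - Y2 * X1) r)
        = μ (hBall ((Y1, Y2), tY) r) := by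
    intro r hr
    have h := HVampAux.ball_eq hvamp hADR hX w hr
    rw [h1, h2] at h
    exact h.symm
  refine ⟨?_, hmain⟩
  intro r hr
  rw [hmain r hr]
  exact hY r hr
end
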